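/- The set Λ = {m + nφ : m, n ∈ ℤ, -1 ≤ m + nφ' ≤ φ - 1} is relatively dense in ℝ: there exists R > 0 such that every closed interval of length 2R contains at least one point of Λ. -/
import Mathlib


noncomputable def goldenφ : ℝ := (1 + Real.sqrt 5) / 2
noncomputable def goldenφ' : ℝ := (1 - Real.sqrt 5) / 2

noncomputable def goldenΛ : Set ℝ :=
  {x | ∃ m n : ℤ, x = m + n * goldenφ ∧
    -1 ≤ (m : ℝ) + n * goldenφ' ∧ (m : ℝ) + n * goldenφ' ≤ goldenφ - 1}

theorem stmt2 :
    ∃ R > 0, ∀ x : ℝ, ∃ y ∈ goldenΛ, y ∈ Set.Icc x (x + 2 * R) := by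
  have h5 : Real.sqrt 5 ^ 2 = 5 := Real.sq_sqrt (by norm_num)
  have h5nn : (0:ℝ) ≤ Real.sqrt 5 := Real.sqrt_nonneg 5
  have h1 : (1:ℝ) ≤ Real.sqrt 5 := by nlinarith
  have h3 : Real.sqrt 5 ≤ 3 := by nlinarith
  refine ⟨2, by norm_num, fun x => ?_⟩
  set s := Real.sqrt 5
  set n : ℤ := ⌈(x + 1) / s⌉ with hn
  set m : ℤ := ⌈-1 - n * goldenφ'⌉ with hm
  have hmge : (-1 : ℝ) - n * goldenφ' ≤ m := Int.le_ceil _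
  have hmlt : (m : ℝ) < -1 - n * goldenφ' + 1 := Int.ceil_lt_add_one _
  have hnge : (x + 1) / s ≤ n := Int.le_ceil _
  have hnlt : (n : ℝ) < (x + 1) / s + 1 := Int.ceil_lt_add_one _
  have hs0 : (0:ℝ) < s := by linarith
  have hns : x + 1 ≤ n * s := by
    rw [div_le_iff₀ hs0] at hnge; linarith
  have hns' : (n : ℝ) * s < x + 1 + s := by
    have := mul_lt_mul_of_pos_right hnlt hs0
    rw [add_mul, one_mul, div_mul_cancel₀ _ (ne_of_gt hs0)] at this
    linarith
  have hdiff : goldenφ - goldenφ' = s := by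
    unfold goldenφ goldenφ'; ring
  refine ⟨(m : ℝ) + n * goldenφ, ⟨m, n, rfl, by linarith, ?_⟩, ?_, ?_⟩
  · have : goldenφ - 1 = (s - 1) / 2 := by unfold goldenφ; ring
    rw [this]; linarith
  · have : (m : ℝ) + n * goldenφ = ((m : ℝ) + n * goldenφ') + n * s := by
      rw [← hdiff]; ring
    rw [this]; linarith
  · have : (m : ℝ) + n * goldenφ = ((m : ℝ) + n * goldenφ') + n * s := by
      rw [← hdiff]; ring
    rw [this]; nlinarith
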